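/- Let f : ℝ^d → ℝ be differentiable with minimizer f* and constants M₀, M₁ > 0 satisfying ‖∇f(x)‖ ≤ M₀ + M₁(f(x) - f*) for all x. Then for all x, x' ∈ ℝ^d, |f(x') - f(x)| ≤ ((M₀/M₁) + (f(x) - f*)) · (exp(M₁‖x' - x‖) - 1). -/

import Mathlib

open Real

lemma key_grad_bound {d : ℕ}
    (f : EuclideanSpace ℝ (Fin d) → ℝ) (xstar : EuclideanSpace ℝ (Fin d)) (M₀ M₁ : ℝ)
    (hf : ContDiff ℝ 1 f)
    (hmin : ∀ y, f xstar ≤ f y)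
    (hM₀ : 0 < M₀) (hM₁ : 0 < M₁)
    (hgrad : ∀ x, ‖gradient f x‖ ≤ M₀ + M₁ * (f x - f xstar))
    (a b : EuclideanSpace ℝ (Fin d)) :
    M₀ / M₁ + (f b - f xstar) ≤ (M₀ / M₁ + (f a - f xstar)) * Real.exp (M₁ * ‖b - a‖) := by
  set F : ℝ → ℝ := fun t => f (a + t • (b - a)) - f xstar + M₀ / M₁ with hFdef
  set F' : ℝ → ℝ := fun t => fderiv ℝ f (a + t • (b - a)) (b - a) with hF'def
  have hdiff := hf.differentiable one_ne_zero
  have hFpos : ∀ t : ℝ, 0 ≤ F t := by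
    intro t
    have := hmin (a + t • (b - a))
    have hd : 0 < M₀ / M₁ := div_pos hM₀ hM₁
    simp only [hFdef]
    linarith
  have hF : ∀ t : ℝ, HasDerivAt F (F' t) t := by
    intro t
    have h1 : HasDerivAt (fun t : ℝ => a + t • (b - a)) (b - a) t := by
      simpa using ((hasDerivAt_id t).smul_const (b - a)).const_add a
    have h2 := (hdiff (a + t • (b - a))).hasFDerivAt.comp_hasDerivAt t h1
    exact (h2.sub_const (f xstar)).add_const (M₀ / M₁)
  have hnorm : ∀ p, ‖fderiv ℝ f p‖ = ‖gradient f p‖ := by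
    intro p
    rw [gradient]
    exact ((InnerProductSpace.toDual ℝ _).symm.norm_map _).symm
  have hbound : ∀ t : ℝ, ‖F' t‖ ≤ (M₁ * ‖b - a‖) * ‖F t‖ + 0 := by
    intro t
    set p := a + t • (b - a) with hp
    have h1 : ‖F' t‖ ≤ ‖fderiv ℝ f p‖ * ‖b - a‖ := (fderiv ℝ f p).le_opNorm _
    have h2 : ‖fderiv ℝ f p‖ ≤ M₀ + M₁ * (f p - f xstar) := by
      rw [hnorm]; exact hgrad p
    have h3 : M₀ + M₁ * (f p - f xstar) = M₁ * F t := by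
      simp only [hFdef, ← hp]; field_simp; ring
    have h4 : F t ≤ ‖F t‖ := le_abs_self _
    have hba : (0:ℝ) ≤ ‖b - a‖ := norm_nonneg _
    calc ‖F' t‖ ≤ ‖fderiv ℝ f p‖ * ‖b - a‖ := h1
      _ ≤ (M₁ * F t) * ‖b - a‖ := by
          apply mul_le_mul_of_nonneg_right _ hba
          rw [← h3]; exact h2
      _ ≤ (M₁ * ‖F t‖) * ‖b - a‖ := by
          apply mul_le_mul_of_nonneg_right _ hba
          exact mul_le_mul_of_nonneg_left h4 hM₁.le
      _ = (M₁ * ‖b - a‖) * ‖F t‖ + 0 := by ring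
  have hgron := norm_le_gronwallBound_of_norm_deriv_right_le
    (f := F) (f' := F') (δ := ‖F 0‖) (K := M₁ * ‖b - a‖) (ε := 0) (a := 0) (b := 1)
    (fun t _ => (hF t).continuousAt.continuousWithinAt)
    (fun t _ => (hF t).hasDerivWithinAt)
    le_rfl
    (fun t _ => hbound t)
  have h1 := hgron 1 (by norm_num)
  rw [gronwallBound_ε0] at h1
  have hF1 : F 1 = f b - f xstar + M₀ / M₁ := by simp [hFdef]
  have hF0 : F 0 = f a - f xstar + M₀ / M₁ := by simp [hFdef]
  have ha0 : ‖F 0‖ = F 0 := abs_of_nonneg (hFpos 0)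
  have ha1 : ‖F 1‖ = F 1 := abs_of_nonneg (hFpos 1)
  rw [ha1, ha0, hF1, hF0] at h1
  calc M₀ / M₁ + (f b - f xstar) = f b - f xstar + M₀ / M₁ := by ring
    _ ≤ (f a - f xstar + M₀ / M₁) * Real.exp (M₁ * ‖b - a‖ * (1 - 0)) := h1
    _ = (M₀ / M₁ + (f a - f xstar)) * Real.exp (M₁ * ‖b - a‖) := by ring_nf

theorem generalized_lipschitz_of_grad_bound {d : ℕ}
    (f : EuclideanSpace ℝ (Fin d) → ℝ) (xstar : EuclideanSpace ℝ (Fin d)) (M₀ M₁ : ℝ)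
    (hf : ContDiff ℝ 1 f)
    (hmin : ∀ y, f xstar ≤ f y)
    (hM₀ : 0 < M₀) (hM₁ : 0 < M₁)
    (hgrad : ∀ x, ‖gradient f x‖ ≤ M₀ + M₁ * (f x - f xstar)) :
    ∀ x x' : EuclideanSpace ℝ (Fin d),
      |f x' - f x| ≤ (M₀ / M₁ + (f x - f xstar)) * (Real.exp (M₁ * ‖x' - x‖) - 1) := by
  intro x x'
  have hup := key_grad_bound f xstar M₀ M₁ hf hmin hM₀ hM₁ hgrad x x'
  have hdown := key_grad_bound f xstar M₀ M₁ hf hmin hM₀ hM₁ hgrad x' x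
  rw [show ‖x - x'‖ = ‖x' - x‖ from norm_sub_rev _ _] at hdown
  set E := Real.exp (M₁ * ‖x' - x‖) with hE
  set A := M₀ / M₁ + (f x - f xstar) with hA
  set B := M₀ / M₁ + (f x' - f xstar) with hB
  have hApos : 0 < A := by
    have := hmin x
    have hd : 0 < M₀ / M₁ := div_pos hM₀ hM₁
    simp only [hA]; linarith
  have hBpos : 0 < B := by
    have := hmin x'
    have hd : 0 < M₀ / M₁ := div_pos hM₀ hM₁
    simp only [hB]; linarith
  have hE1 : 1 ≤ E := by
    rw [hE]
    exact Real.one_le_exp (by positivity)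
  have hgoal : f x' - f x = B - A := by simp only [hA, hB]; ring
  rw [abs_le]
  constructor
  · -- lower: -(A*(E-1)) ≤ B - A, using A ≤ B * E
    rw [hgoal]
    nlinarith [hdown, hApos, hBpos, hE1, sq_nonneg (E - 1), mul_pos hApos (lt_of_lt_of_le one_pos hE1)]
  · rw [hgoal]
    nlinarith [hup]
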